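/- If w(z) = 1/(z m(z) m̃(z)) where m and m̃ are the Stieltjes transforms of the Marcenko-Pastur distributions μ_{σ²,c} and cμ_{σ²,c} + (1-c)δ₀ respectively, then φ(w(z)) = z for all real z > σ²(1+√c)², where φ(w) = (w + σ²)(w + σ²c)/w. -/

import Mathlib

/-- If `m, m̃` satisfy the coupled Marcenko-Pastur fixed-point equations at a real point
`x > σ²(1+√c)²`, and `w = 1/(x m m̃)`, then `φ(w) = (w+σ²)(w+σ²c)/w = x`. -/
theorem stmt5 (σ2 c : ℝ) (hσ : 0 < σ2) (hc : 0 < c)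
    (x : ℝ) (hx : σ2 * (1 + Real.sqrt c) ^ 2 < x)
    (m mt : ℂ) (hm0 : m ≠ 0) (hmt0 : mt ≠ 0)
    (hm : m = 1 / (-(x : ℂ) * (1 + (σ2 : ℂ) * mt)))
    (hmt : mt = 1 / (-(x : ℂ) * (1 + (σ2 : ℂ) * (c : ℂ) * m))) :
    (1 / ((x : ℂ) * m * mt) + (σ2 : ℂ)) * (1 / ((x : ℂ) * m * mt) + (σ2 : ℂ) * (c : ℂ)) /
        (1 / ((x : ℂ) * m * mt)) = (x : ℂ) := by
  have hxpos : (0:ℝ) < x := lt_trans (by positivity) hx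
  have hx0 : (x : ℂ) ≠ 0 := by exact_mod_cast hxpos.ne'
  have hd1 : (-(x : ℂ) * (1 + (σ2 : ℂ) * mt)) ≠ 0 := by
    intro h; rw [h, div_zero] at hm; exact hm0 hm
  have hd2 : (-(x : ℂ) * (1 + (σ2 : ℂ) * (c : ℂ) * m)) ≠ 0 := by
    intro h; rw [h, div_zero] at hmt; exact hmt0 hmt
  have e1 : m * (-(x : ℂ) * (1 + (σ2 : ℂ) * mt)) = 1 := by
    rw [hm]; exact one_div_mul_cancel hd1
  have e2 : mt * (-(x : ℂ) * (1 + (σ2 : ℂ) * (c : ℂ) * m)) = 1 := by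
    rw [hmt]; exact one_div_mul_cancel hd2
  have f1 : 1 / ((x : ℂ) * m * mt) + (σ2 : ℂ) = -1 / mt := by
    field_simp
    linear_combination -e1
  have f2 : 1 / ((x : ℂ) * m * mt) + (σ2 : ℂ) * (c : ℂ) = -1 / m := by
    field_simp
    linear_combination -e2
  rw [f1, f2]
  field_simp
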